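/- There exists R₀ > 0 such that for all R ≥ R₀ and all p ∈ M, the function θ ↦ e^{θ+R}·((1 − β(θ/R))·f(p) + β(θ/R)) has strictly positive derivative at every θ ∈ ℝ; in particular it is strictly monotone increasing on ℝ. -/

import Mathlib

/-- Let `M` be a nonempty compact space, `f : M → ℝ` continuous and positive, and
`β : ℝ → ℝ` a `C¹` cutoff function: `0 ≤ β ≤ 1`, `β' ≥ 0`, `β = 0` on `(-∞, -1]`
and `β = 1` on `[1, ∞)`. Then there is `R₀ > 0` such that for all `R ≥ R₀` and
all `p ∈ M`, the function `θ ↦ exp (θ + R) * ((1 - β (θ/R)) * f p + β (θ/R))`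
has strictly positive derivative everywhere; in particular it is strictly
monotone increasing on `ℝ`. -/
theorem ustilovsky_interpolation_strict_mono
    (M : Type*) [TopologicalSpace M] [CompactSpace M] [Nonempty M]
    (f : M → ℝ) (hf : Continuous f) (hfpos : ∀ p, 0 < f p)
    (β : ℝ → ℝ) (hβ : ContDiff ℝ 1 β)
    (hβ01 : ∀ t, 0 ≤ β t ∧ β t ≤ 1) (hβ' : ∀ t, 0 ≤ deriv β t)
    (hβ0 : ∀ t ≤ (-1 : ℝ), β t = 0) (hβ1 : ∀ t ≥ (1 : ℝ), β t = 1) :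
    ∃ R₀ > (0 : ℝ), ∀ R ≥ R₀, ∀ p : M,
      (∀ θ : ℝ,
          0 < deriv (fun θ : ℝ =>
            Real.exp (θ + R) * ((1 - β (θ / R)) * f p + β (θ / R))) θ) ∧
        StrictMono (fun θ : ℝ =>
          Real.exp (θ + R) * ((1 - β (θ / R)) * f p + β (θ / R))) := by
  obtain ⟨p₀, -, hp₀⟩ := isCompact_univ.exists_isMinOn Set.univ_nonempty hf.continuousOn
  obtain ⟨p₁, -, hp₁⟩ := isCompact_univ.exists_isMaxOn Set.univ_nonempty hf.continuousOn
  have hc : 0 < f p₀ := hfpos p₀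
  have hF : 0 < f p₁ := hfpos p₁
  have hderiv_cont : Continuous (deriv β) := hβ.continuous_deriv le_rfl
  obtain ⟨B, hB⟩ := (isCompact_Icc : IsCompact (Set.Icc (-1 : ℝ) 1)).exists_bound_of_continuousOn
    hderiv_cont.continuousOn
  set B' := max B 0 with hB'def
  have hB'0 : 0 ≤ B' := le_max_right _ _
  have hdzero : ∀ t : ℝ, t ∉ Set.Icc (-1 : ℝ) 1 → deriv β t = 0 := by
    intro t ht
    rcases lt_or_ge t (-1) with h | h
    · have hev : β =ᶠ[nhds t] fun _ => (0 : ℝ) :=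
        Filter.eventually_of_mem (Iio_mem_nhds h) fun s hs => hβ0 s (le_of_lt hs)
      rw [hev.deriv_eq, deriv_const]
    · have h1 : 1 < t := by
        simp only [Set.mem_Icc, not_and_or, not_le] at ht
        rcases ht with h' | h' <;> linarith
      have hev : β =ᶠ[nhds t] fun _ => (1 : ℝ) :=
        Filter.eventually_of_mem (Ioi_mem_nhds h1) fun s hs => hβ1 s (le_of_lt hs)
      rw [hev.deriv_eq, deriv_const]
  have hdB : ∀ t : ℝ, deriv β t ≤ B' := by
    intro t
    by_cases ht : t ∈ Set.Icc (-1 : ℝ) 1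
    · calc deriv β t ≤ ‖deriv β t‖ := le_abs_self _
        _ ≤ B := hB t ht
        _ ≤ B' := le_max_left _ _
    · rw [hdzero t ht]; exact hB'0
  set m := min (f p₀) 1 with hmdef
  have hm : 0 < m := lt_min hc one_pos
  have hm1 : m ≤ 1 := min_le_right _ _
  refine ⟨2 * B' * (1 + f p₁) / m + 1, by positivity, fun R hR p => ?_⟩
  have hRpos : 0 < R := lt_of_lt_of_le (by positivity) hR
  have hfp : 0 < f p := hfpos p
  have hfpm : m ≤ f p := (min_le_left _ _).trans (hp₀ (Set.mem_univ p))
  have hfpF : f p ≤ f p₁ := hp₁ (Set.mem_univ p)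
  have key : ∀ θ : ℝ,
      HasDerivAt (fun θ : ℝ =>
          Real.exp (θ + R) * ((1 - β (θ / R)) * f p + β (θ / R)))
        (Real.exp (θ + R) * ((1 - β (θ / R)) * f p + β (θ / R)) +
          Real.exp (θ + R) *
            (-(deriv β (θ / R) * (1 / R)) * f p + deriv β (θ / R) * (1 / R))) θ := by
    intro θ
    have h1 : HasDerivAt (fun θ : ℝ => θ / R) (1 / R) θ := (hasDerivAt_id θ).div_const R
    have h2 : HasDerivAt (fun θ : ℝ => β (θ / R)) (deriv β (θ / R) * (1 / R)) θ :=
      ((hβ.differentiable one_ne_zero (θ / R)).hasDerivAt).comp θ h1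
    have h3 : HasDerivAt (fun θ : ℝ => (1 - β (θ / R)) * f p + β (θ / R))
        (-(deriv β (θ / R) * (1 / R)) * f p + deriv β (θ / R) * (1 / R)) θ :=
      ((h2.const_sub 1).mul_const (f p)).add h2
    have h4 : HasDerivAt (fun θ : ℝ => Real.exp (θ + R)) (Real.exp (θ + R)) θ := by
      simpa using ((hasDerivAt_id θ).add_const R).exp
    exact h4.mul h3
  have hpos : ∀ θ : ℝ,
      0 < deriv (fun θ : ℝ =>
        Real.exp (θ + R) * ((1 - β (θ / R)) * f p + β (θ / R))) θ := by
    intro θ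
    rw [(key θ).deriv]
    have hβθ := hβ01 (θ / R)
    have hd0 : 0 ≤ deriv β (θ / R) := hβ' (θ / R)
    have hdB' : deriv β (θ / R) ≤ B' := hdB (θ / R)
    have hexp : 0 < Real.exp (θ + R) := Real.exp_pos _
    have hg : m ≤ (1 - β (θ / R)) * f p + β (θ / R) := by
      nlinarith [mul_le_mul_of_nonneg_left hfpm (sub_nonneg.2 hβθ.2)]
    have hmain : 0 < (1 - β (θ / R)) * f p + β (θ / R) +
        (-(deriv β (θ / R) * (1 / R)) * f p + deriv β (θ / R) * (1 / R)) := by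
      have hRm : 2 * B' * (1 + f p₁) + m ≤ R * m := by
        have h := hR
        rw [ge_iff_le, div_add' _ _ _ hm.ne', div_le_iff₀ hm] at h
        linarith
      have h5 : deriv β (θ / R) * f p ≤ B' * f p₁ :=
        mul_le_mul hdB' hfpF hfp.le hB'0
      have hkey2 : 0 < R * ((1 - β (θ / R)) * f p + β (θ / R)) +
          (-(deriv β (θ / R) * f p) + deriv β (θ / R)) := by
        nlinarith [mul_le_mul_of_nonneg_left hg hRpos.le, mul_nonneg hB'0 hF.le]
      have heq : (1 - β (θ / R)) * f p + β (θ / R) +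
          (-(deriv β (θ / R) * (1 / R)) * f p + deriv β (θ / R) * (1 / R)) =
          (R * ((1 - β (θ / R)) * f p + β (θ / R)) +
            (-(deriv β (θ / R) * f p) + deriv β (θ / R))) / R := by
        field_simp
      rw [heq]
      exact div_pos hkey2 hRpos
    nlinarith
  exact ⟨hpos, strictMono_of_deriv_pos hpos⟩
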